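/- (Approximation theorem for IPDS.) Let X = [-M,M]^p with M > 0, let Y ⊂ ℝ^{K*} be a compact set for some K* ∈ ℕ, let f* : X → Y be continuous, and let g* : Y × Y → ℝ be a kernel that is dominated by some positive definite kernel g, i.e., g − g* is positive definite. Let σ : ℝ → ℝ be either the ReLU function or a non-constant, continuous, bounded, monotonically increasing function. Then for every ε > 0 there exist K₊, K₋, m₊, m₋ ∈ ℕ and A ∈ ℝ^{K₊×m₊}, B ∈ ℝ^{m₊×p}, c ∈ ℝ^{m₊}, E ∈ ℝ^{K₋×m₋}, F ∈ ℝ^{m₋×p}, o ∈ ℝ^{m₋} such that, writing f_NN(x) = A σ(B x + c) and r_NN(x) = E σ(F x + o) with σ applied elementwise, |g*(f*(x), f*(x')) − (⟨f_NN(x), f_NN(x')⟩ − ⟨r_NN(x), r_NN(x')⟩)| < ε for all (x, x') ∈ X × X. -/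

import Mathlib

namespace IPDS

/-- One-hidden-layer scalar NN representability. -/
def IsNN (σ : ℝ → ℝ) {p : ℕ} (w : (Fin p → ℝ) → ℝ) : Prop :=
  ∃ (n : ℕ) (α : Fin n → ℝ) (β : Fin n → Fin p → ℝ) (γ : Fin n → ℝ),
    ∀ x, w x = ∑ i, α i * σ (∑ j, β i j * x j + γ i)

theorem IsNN.add {σ : ℝ → ℝ} {p : ℕ} {w v : (Fin p → ℝ) → ℝ}
    (hw : IsNN σ w) (hv : IsNN σ v) : IsNN σ (fun x => w x + v x) := by
  obtain ⟨n, α, β, γ, h⟩ := hw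
  obtain ⟨m, α', β', γ', h'⟩ := hv
  refine ⟨n + m, Fin.append α α', Fin.append β β', Fin.append γ γ', fun x => ?_⟩
  simp only []
  rw [Fin.sum_univ_add]
  simp only [Fin.append_left, Fin.append_right]
  rw [h, h']

theorem IsNN.smul {σ : ℝ → ℝ} {p : ℕ} {w : (Fin p → ℝ) → ℝ}
    (c : ℝ) (hw : IsNN σ w) : IsNN σ (fun x => c * w x) := by
  obtain ⟨n, α, β, γ, h⟩ := hw
  refine ⟨n, fun i => c * α i, β, γ, fun x => ?_⟩
  simp only []
  rw [h, Finset.mul_sum]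
  simp [mul_assoc]

theorem IsNN.const {σ : ℝ → ℝ} {p : ℕ} (z : ℝ) (hz : σ z ≠ 0) (K : ℝ) :
    IsNN σ (fun _ : Fin p → ℝ => K) := by
  refine ⟨1, fun _ => K / σ z, fun _ _ => 0, fun _ => z, fun x => ?_⟩
  simp [div_mul_cancel₀, hz]

theorem sigma_ne_zero {σ : ℝ → ℝ}
    (hσ : (σ = fun z => max 0 z) ∨
      ((∃ a b, σ a ≠ σ b) ∧ Continuous σ ∧ (∃ C, ∀ z, |σ z| ≤ C) ∧ Monotone σ)) :
    ∃ z, σ z ≠ 0 := by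
  rcases hσ with h | ⟨⟨a, b, hab⟩, -⟩
  · exact ⟨1, by simp [h]⟩
  · by_contra hc
    push_neg at hc
    exact hab (by rw [hc a, hc b])

end IPDS

namespace IPDS

/-- approximability on the cube to every accuracy by one-hidden-layer networks -/
def NNApprox (σ : ℝ → ℝ) (p : ℕ) (M : ℝ) (f : (Fin p → ℝ) → ℝ) : Prop :=
  ∀ δ > (0:ℝ), ∃ w, IsNN σ w ∧ ∀ x : Fin p → ℝ, (∀ i, |x i| ≤ M) → |f x - w x| ≤ δ

theorem NNApprox.add {σ : ℝ → ℝ} {p : ℕ} {M : ℝ} {f g : (Fin p → ℝ) → ℝ}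
    (hf : NNApprox σ p M f) (hg : NNApprox σ p M g) :
    NNApprox σ p M (fun x => f x + g x) := by
  intro δ hδ
  obtain ⟨w, hw, hwa⟩ := hf (δ/2) (by linarith)
  obtain ⟨v, hv, hva⟩ := hg (δ/2) (by linarith)
  refine ⟨fun x => w x + v x, hw.add hv, fun x hx => ?_⟩
  have h1 := hwa x hx
  have h2 := hva x hx
  calc |f x + g x - (w x + v x)| = |(f x - w x) + (g x - v x)| := by ring_nf
    _ ≤ |f x - w x| + |g x - v x| := abs_add_le _ _
    _ ≤ δ := by linarith

theorem NNApprox.smul {σ : ℝ → ℝ} {p : ℕ} {M : ℝ} {f : (Fin p → ℝ) → ℝ}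
    (c : ℝ) (hf : NNApprox σ p M f) : NNApprox σ p M (fun x => c * f x) := by
  intro δ hδ
  obtain ⟨w, hw, hwa⟩ := hf (δ / (|c| + 1)) (by positivity)
  refine ⟨fun x => c * w x, hw.smul c, fun x hx => ?_⟩
  have h1 := hwa x hx
  calc |c * f x - c * w x| = |c| * |f x - w x| := by rw [← abs_mul]; ring_nf
    _ ≤ |c| * (δ / (|c| + 1)) := by
        apply mul_le_mul_of_nonneg_left h1 (abs_nonneg c)
    _ ≤ δ := by
        have h2 : 0 < |c| + 1 := by positivity
        rw [mul_div_assoc', div_le_iff₀ h2]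
        nlinarith [abs_nonneg c]

end IPDS


namespace IPDS

set_option maxHeartbeats 1000000 in
theorem oneD_sigmoid {σ : ℝ → ℝ} (hne : ∃ a b, σ a ≠ σ b) (hbd : ∃ C, ∀ z, |σ z| ≤ C)
    (hmono : Monotone σ) (g : ℝ → ℝ) (hg : Continuous g) (R : ℝ) (hR : 0 < R)
    {ε : ℝ} (hε : 0 < ε) :
    ∃ (n : ℕ) (a w c : Fin n → ℝ), ∀ t ∈ Set.Icc (-R) R,
      |g t - ∑ i, a i * σ (w i * t + c i)| ≤ ε := by
  classical
  obtain ⟨C, hC⟩ := hbd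
  have hbdd_above : BddAbove (Set.range σ) := ⟨C, by rintro _ ⟨z, rfl⟩; exact (abs_le.1 (hC z)).2⟩
  have hbdd_below : BddBelow (Set.range σ) := ⟨-C, by rintro _ ⟨z, rfl⟩; exact (abs_le.1 (hC z)).1⟩
  set ℓ : ℝ := ⨅ z, σ z with hℓdef
  set L : ℝ := ⨆ z, σ z with hLdef
  have hℓ : ∀ z, ℓ ≤ σ z := fun z => ciInf_le hbdd_below z
  have hL : ∀ z, σ z ≤ L := fun z => le_ciSup hbdd_above z
  have hLℓ : 0 < L - ℓ := by
    obtain ⟨a, b, hab⟩ := hne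
    rcases hab.lt_or_gt with h | h
    · have := (hℓ a).trans_lt (h.trans_le (hL b))
      linarith [hℓ a, hL b, h, hℓ b, hL a]
    · linarith [hℓ b, hL a, h]
  -- uniform continuity of g on [-R, R]
  have hUC : UniformContinuousOn g (Set.Icc (-R) R) :=
    (isCompact_Icc).uniformContinuousOn_of_continuous hg.continuousOn
  have hε4 : 0 < ε / 4 := by linarith
  obtain ⟨δ, hδpos, hδ⟩ := (Metric.uniformContinuousOn_iff).1 hUC (ε/4) hε4
  -- the grid
  set N : ℕ := ⌈2 * R / δ⌉₊ + 1 with hNdef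
  have hN1 : 1 ≤ N := Nat.le_add_left 1 _
  have hNpos : (0:ℝ) < N := by positivity
  set h : ℝ := 2 * R / N with hhdef
  have hhpos : 0 < h := by positivity
  have hhδ : h < δ := by
    rw [hhdef, div_lt_iff₀ hNpos]
    have h1 : 2 * R / δ < N := by
      have := Nat.lt_succ_floor (2 * R / δ)
      calc 2 * R / δ ≤ ⌈2 * R / δ⌉₊ := Nat.le_ceil _
        _ < N := by exact_mod_cast Nat.lt_succ_self _
    calc 2 * R = (2 * R / δ) * δ := by field_simp
      _ < N * δ := by apply mul_lt_mul_of_pos_right h1 hδpos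
      _ = δ * N := mul_comm _ _
  set t : ℕ → ℝ := fun i => -R + i * h with htdef
  have htN : t N = R := by
    rw [htdef]; simp only []
    rw [hhdef]; field_simp; ring
  have htmem : ∀ i ≤ N, t i ∈ Set.Icc (-R) R := by
    intro i hi
    constructor
    · rw [htdef]; simp only []
      nlinarith [hhpos.le, Nat.cast_nonneg (α := ℝ) i]
    · rw [htdef]; simp only []
      have : (i:ℝ) * h ≤ N * h := by
        apply mul_le_mul_of_nonneg_right _ hhpos.le
        exact_mod_cast hi
      have h2 : (N:ℝ) * h = 2 * R := by rw [hhdef]; field_simp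
      linarith
  set Δ : ℕ → ℝ := fun i => g (t (i+1)) - g (t i) with hΔdef
  have hΔbd : ∀ i < N, |Δ i| ≤ ε / 4 := by
    intro i hi
    have h1 := htmem i hi.le
    have h2 := htmem (i+1) hi
    have hd : dist (t (i+1)) (t i) < δ := by
      rw [Real.dist_eq]
      have : t (i+1) - t i = h := by rw [htdef]; push_cast; ring
      rw [this, abs_of_pos hhpos]; exact hhδ
    have := hδ _ h2 _ h1 hd
    rw [Real.dist_eq] at this
    exact this.le
  -- tail behavior of σ
  set η : ℝ := 1 / N with hηdef
  have hηpos : 0 < η := by positivity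
  have hηL : 0 < η * (L - ℓ) := by positivity
  have htop : Filter.Tendsto σ Filter.atTop (nhds L) := tendsto_atTop_ciSup hmono hbdd_above
  have hbot : Filter.Tendsto σ Filter.atBot (nhds ℓ) := tendsto_atBot_ciInf hmono hbdd_below
  obtain ⟨z₁, hz₁⟩ := (Metric.tendsto_atTop.1 htop) (η * (L - ℓ)) hηL
  obtain ⟨z₂, hz₂'⟩ := Filter.eventually_atBot.1 (hbot.eventually (Metric.ball_mem_nhds ℓ hηL))
  have hz₂ : ∀ z ≤ z₂, dist (σ z) ℓ < η * (L - ℓ) := fun z hz => Metric.mem_ball.1 (hz₂' z hz)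
  set lam : ℝ := (|z₁| + |z₂| + 1) * (2 / h) with hlamdef
  have hlampos : 0 < lam := by positivity
  have hlamh : lam * (h / 2) = |z₁| + |z₂| + 1 := by
    rw [hlamdef]; field_simp
  have hlam1 : z₁ ≤ lam * (h / 2) := by
    rw [hlamh]; linarith [le_abs_self z₁, abs_nonneg z₂]
  have hlam2 : -(lam * (h / 2)) ≤ z₂ := by
    rw [hlamh]; linarith [neg_abs_le z₂, abs_nonneg z₁]
  set τ : ℝ → ℝ := fun z => (σ z - ℓ) / (L - ℓ) with hτdef
  have hτ0 : ∀ z, 0 ≤ τ z := fun z => div_nonneg (by linarith [hℓ z]) hLℓ.le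
  have hτ1 : ∀ z, τ z ≤ 1 := fun z => by
    rw [hτdef]; simp only []
    rw [div_le_one hLℓ]; linarith [hL z]
  have hτhi : ∀ z, z₁ ≤ z → 1 - η ≤ τ z := by
    intro z hz
    have := hz₁ z hz
    rw [Real.dist_eq, abs_lt] at this
    rw [hτdef]; simp only []
    rw [le_div_iff₀ hLℓ]
    nlinarith
  have hτlo : ∀ z, z ≤ z₂ → τ z ≤ η := by
    intro z hz
    have := hz₂ z hz
    rw [Real.dist_eq, abs_lt] at this
    rw [hτdef]; simp only []
    rw [div_le_iff₀ hLℓ]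
    nlinarith
  set m : ℕ → ℝ := fun i => t i + h / 2 with hmdef
  set F : ℝ → ℝ := fun s => g (t 0) + ∑ i ∈ Finset.range N, Δ i * τ (lam * (s - m i)) with hFdef
  have hteq : ∀ i : ℕ, t i = -R + i * h := fun _ => rfl
  have hmeq : ∀ i : ℕ, m i = t i + h / 2 := fun _ => rfl
  have hτeq : ∀ z, τ z = (σ z - ℓ) / (L - ℓ) := fun _ => rfl
  have hΔeq : ∀ i : ℕ, Δ i = g (t (i+1)) - g (t i) := fun _ => rfl
  have hFeq : ∀ s, F s = g (t 0) + ∑ i ∈ Finset.range N, Δ i * τ (lam * (s - m i)) :=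
    fun _ => rfl
  clear_value ℓ L t Δ η lam τ m F
  -- main pointwise estimate
  have hmain : ∀ s ∈ Set.Icc (-R) R, |g s - F s| ≤ ε := by
    intro s hs
    obtain ⟨hs1, hs2⟩ := hs
    set j : ℕ := min ⌊(s + R) / h⌋₊ (N - 1) with hjdef
    have hjN : j < N := by
      have : j ≤ N - 1 := min_le_right _ _
      omega
    have hjle : t j ≤ s := by
      have h1 : (j:ℝ) ≤ (s + R) / h := by
        have h2 : j ≤ ⌊(s + R) / h⌋₊ := min_le_left _ _
        have h3 : (⌊(s + R) / h⌋₊ : ℝ) ≤ (s + R) / h := Nat.floor_le (div_nonneg (by linarith) hhpos.le)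
        calc (j:ℝ) ≤ (⌊(s + R) / h⌋₊:ℝ) := by exact_mod_cast h2
          _ ≤ _ := h3
      have := (le_div_iff₀ hhpos).1 h1
      rw [hteq]; linarith
    have hjge : s ≤ t (j + 1) := by
      rcases le_or_gt ⌊(s + R) / h⌋₊ (N - 1) with hc | hc
      · have hjeq : j = ⌊(s + R) / h⌋₊ := min_eq_left hc
        have h1 : (s + R) / h < ⌊(s + R) / h⌋₊ + 1 := Nat.lt_floor_add_one _
        have h2 : s + R < (⌊(s + R) / h⌋₊ + 1 : ℝ) * h := (div_lt_iff₀ hhpos).1 h1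
        rw [hteq]
        rw [hjeq]; push_cast; linarith
      · have hjeq : j = N - 1 := min_eq_right (by omega)
        have : j + 1 = N := by omega
        rw [this, htN]; exact hs2
    have hsmem : s ∈ Set.Icc (-R) R := ⟨hs1, hs2⟩
    -- decompose the sum
    have hsplit : ∑ i ∈ Finset.range N, Δ i * τ (lam * (s - m i))
        = (∑ i ∈ Finset.range j, Δ i * τ (lam * (s - m i)))
          + Δ j * τ (lam * (s - m j))
          + ∑ i ∈ Finset.Ico (j+1) N, Δ i * τ (lam * (s - m i)) := by
      rw [← Finset.sum_range_add_sum_Ico _ (by omega : j + 1 ≤ N), Finset.sum_range_succ]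
    have htele : ∑ i ∈ Finset.range j, Δ i = g (t j) - g (t 0) := by
      rw [Finset.sum_congr rfl (fun i _ => hΔeq i)]
      exact Finset.sum_range_sub (fun i => g (t i)) j
    have hkey : g s - F s
        = (g s - g (t j))
          - (∑ i ∈ Finset.range j, Δ i * (τ (lam * (s - m i)) - 1))
          - Δ j * τ (lam * (s - m j))
          - ∑ i ∈ Finset.Ico (j+1) N, Δ i * τ (lam * (s - m i)) := by
      rw [hFeq s]
      rw [hsplit]
      have : ∑ i ∈ Finset.range j, Δ i * (τ (lam * (s - m i)) - 1)
          = (∑ i ∈ Finset.range j, Δ i * τ (lam * (s - m i))) - (g (t j) - g (t 0)) := by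
        rw [← htele, ← Finset.sum_sub_distrib]
        congr 1; ext i; ring
      rw [this]; ring
    -- bound each piece
    have b1 : |g s - g (t j)| ≤ ε / 4 := by
      have hd : dist s (t j) < δ := by
        rw [Real.dist_eq, abs_of_nonneg (by linarith)]
        have h3 : t (j+1) - t j = h := by rw [hteq (j+1), hteq j]; push_cast; ring
        have h2 : s - t j ≤ h := by linarith [hjge]
        linarith
      have := hδ s hsmem (t j) (htmem j hjN.le) hd
      rw [Real.dist_eq] at this; exact this.le
    have b2 : |∑ i ∈ Finset.range j, Δ i * (τ (lam * (s - m i)) - 1)| ≤ ε / 4 := by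
      calc |∑ i ∈ Finset.range j, Δ i * (τ (lam * (s - m i)) - 1)|
          ≤ ∑ i ∈ Finset.range j, |Δ i * (τ (lam * (s - m i)) - 1)| :=
            Finset.abs_sum_le_sum_abs _ _
        _ ≤ ∑ i ∈ Finset.range j, (ε/4) * η := by
            apply Finset.sum_le_sum
            intro i hi
            have hiN : i < N := lt_of_lt_of_le (Finset.mem_range.1 hi) (by omega)
            rw [abs_mul]
            apply mul_le_mul (hΔbd i hiN) _ (abs_nonneg _) hε4.le
            -- need |τ - 1| ≤ η, i.e. τ ≥ 1 - η
            have hge : h / 2 ≤ s - m i := by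
              have hij : (i:ℝ) + 1 ≤ j := by
                have : i + 1 ≤ j := Finset.mem_range.1 hi
                exact_mod_cast this
              have h5 : t i + h ≤ t j := by
                rw [hteq i, hteq j]
                nlinarith
              linarith [hjle, h5, hmeq i]
            have harg : z₁ ≤ lam * (s - m i) := by
              calc z₁ ≤ lam * (h/2) := hlam1
                _ ≤ lam * (s - m i) := by
                    apply mul_le_mul_of_nonneg_left hge hlampos.le
            have := hτhi _ harg
            rw [abs_le]
            constructor <;> [linarith [hτ1 (lam * (s - m i))]; linarith [hτ1 (lam * (s - m i))]]
        _ = j * ((ε/4) * η) := by rw [Finset.sum_const, Finset.card_range, nsmul_eq_mul]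
        _ ≤ N * ((ε/4) * η) := by
            apply mul_le_mul_of_nonneg_right _ (by positivity)
            exact_mod_cast hjN.le
        _ = ε / 4 := by
            rw [hηdef]; field_simp
    have b3 : |Δ j * τ (lam * (s - m j))| ≤ ε / 4 := by
      rw [abs_mul]
      calc |Δ j| * |τ (lam * (s - m j))| ≤ (ε/4) * 1 := by
            apply mul_le_mul (hΔbd j hjN) _ (abs_nonneg _) hε4.le
            rw [abs_of_nonneg (hτ0 _)]; exact hτ1 _
        _ = ε / 4 := mul_one _
    have b4 : |∑ i ∈ Finset.Ico (j+1) N, Δ i * τ (lam * (s - m i))| ≤ ε / 4 := by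
      calc |∑ i ∈ Finset.Ico (j+1) N, Δ i * τ (lam * (s - m i))|
          ≤ ∑ i ∈ Finset.Ico (j+1) N, |Δ i * τ (lam * (s - m i))| :=
            Finset.abs_sum_le_sum_abs _ _
        _ ≤ ∑ i ∈ Finset.Ico (j+1) N, (ε/4) * η := by
            apply Finset.sum_le_sum
            intro i hi
            obtain ⟨hi1, hi2⟩ := Finset.mem_Ico.1 hi
            rw [abs_mul]
            apply mul_le_mul (hΔbd i hi2) _ (abs_nonneg _) hε4.le
            have hle : s - m i ≤ -(h/2) := by
              have hji : (j:ℝ) + 1 ≤ i := by exact_mod_cast hi1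
              have h5 : t (j+1) ≤ t i := by
                rw [hteq i, hteq (j+1)]
                push_cast
                nlinarith
              linarith [hjge, h5, hmeq i]
            have harg : lam * (s - m i) ≤ z₂ := by
              calc lam * (s - m i) ≤ lam * (-(h/2)) := by
                    apply mul_le_mul_of_nonneg_left hle hlampos.le
                _ = -(lam * (h/2)) := by ring
                _ ≤ z₂ := hlam2
            have := hτlo _ harg
            rw [abs_of_nonneg (hτ0 _)]
            exact this
        _ ≤ N * ((ε/4) * η) := by
            rw [Finset.sum_const, nsmul_eq_mul]
            apply mul_le_mul_of_nonneg_right _ (by positivity)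
            have := Nat.card_Ico (j+1) N
            have h2 : (Finset.Ico (j+1) N).card ≤ N := by
              rw [Nat.card_Ico]; omega
            exact_mod_cast h2
        _ = ε / 4 := by rw [hηdef]; field_simp
    rw [hkey]
    have := abs_sub (G := ℝ)
    calc |g s - g (t j) - (∑ i ∈ Finset.range j, Δ i * (τ (lam * (s - m i)) - 1))
          - Δ j * τ (lam * (s - m j))
          - ∑ i ∈ Finset.Ico (j+1) N, Δ i * τ (lam * (s - m i))|
        ≤ |g s - g (t j) - (∑ i ∈ Finset.range j, Δ i * (τ (lam * (s - m i)) - 1))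
          - Δ j * τ (lam * (s - m j))|
          + |∑ i ∈ Finset.Ico (j+1) N, Δ i * τ (lam * (s - m i))| := abs_sub _ _
      _ ≤ |g s - g (t j) - (∑ i ∈ Finset.range j, Δ i * (τ (lam * (s - m i)) - 1))|
          + |Δ j * τ (lam * (s - m j))|
          + |∑ i ∈ Finset.Ico (j+1) N, Δ i * τ (lam * (s - m i))| := by
          linarith [abs_sub (g s - g (t j) - (∑ i ∈ Finset.range j, Δ i * (τ (lam * (s - m i)) - 1))) (Δ j * τ (lam * (s - m j)))]
      _ ≤ |g s - g (t j)| + |∑ i ∈ Finset.range j, Δ i * (τ (lam * (s - m i)) - 1)|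
          + |Δ j * τ (lam * (s - m j))|
          + |∑ i ∈ Finset.Ico (j+1) N, Δ i * τ (lam * (s - m i))| := by
          linarith [abs_sub (g s - g (t j)) (∑ i ∈ Finset.range j, Δ i * (τ (lam * (s - m i)) - 1))]
      _ ≤ ε := by linarith
  -- now express F as a network
  obtain ⟨zstar, hzstar⟩ : ∃ z, σ z ≠ 0 := by
    by_contra hc
    push_neg at hc
    obtain ⟨a, b, hab⟩ := hne
    exact hab (by rw [hc a, hc b])
  set K₀ : ℝ := g (t 0) - (∑ i ∈ Finset.range N, Δ i) * ℓ / (L - ℓ) with hK₀def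
  refine ⟨N + 1,
    Fin.snoc (fun i : Fin N => Δ (i:ℕ) / (L - ℓ)) (K₀ / σ zstar),
    Fin.snoc (fun _ : Fin N => lam) 0,
    Fin.snoc (fun i : Fin N => -(lam * m (i:ℕ))) zstar,
    fun s hs => ?_⟩
  have hrepr : (∑ i : Fin (N+1),
      (Fin.snoc (fun i : Fin N => Δ (i:ℕ) / (L - ℓ)) (K₀ / σ zstar) : Fin (N+1) → ℝ) i
        * σ ((Fin.snoc (fun _ : Fin N => lam) 0 : Fin (N+1) → ℝ) i * s
            + (Fin.snoc (fun i : Fin N => -(lam * m (i:ℕ))) zstar : Fin (N+1) → ℝ) i))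
      = F s := by
    rw [Fin.sum_univ_castSucc]
    simp only [Fin.snoc_castSucc, Fin.snoc_last]
    have hlast2 : (K₀ / σ zstar) * σ (0 * s + zstar) = K₀ := by
      rw [zero_mul, zero_add, div_mul_cancel₀ _ hzstar]
    rw [hlast2]
    rw [Fin.sum_univ_eq_sum_range (fun k => (Δ k / (L - ℓ)) * σ (lam * s + -(lam * m k)))]
    have hterm : ∀ i : ℕ, (Δ i / (L - ℓ)) * σ (lam * s + -(lam * m i))
        = Δ i * τ (lam * (s - m i)) + Δ i * ℓ / (L - ℓ) := by
      intro i
      have harg : lam * s + -(lam * m i) = lam * (s - m i) := by ring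
      rw [harg, hτeq]
      field_simp
      ring
    rw [Finset.sum_congr rfl (fun i _ => hterm i), Finset.sum_add_distrib]
    have hsd : ∑ i ∈ Finset.range N, Δ i * ℓ / (L - ℓ)
        = (∑ i ∈ Finset.range N, Δ i) * ℓ / (L - ℓ) := by
      rw [← Finset.sum_div, ← Finset.sum_mul]
    rw [hsd, hFeq s, hK₀def]
    ring
  rw [hrepr]
  exact hmain s hs

end IPDS

namespace IPDS

theorem oneD {σ : ℝ → ℝ}
    (hσ : (σ = fun z => max 0 z) ∨
      ((∃ a b, σ a ≠ σ b) ∧ Continuous σ ∧ (∃ C, ∀ z, |σ z| ≤ C) ∧ Monotone σ))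
    (g : ℝ → ℝ) (hg : Continuous g) (R : ℝ) (hR : 0 < R) {ε : ℝ} (hε : 0 < ε) :
    ∃ (n : ℕ) (a w c : Fin n → ℝ), ∀ t ∈ Set.Icc (-R) R,
      |g t - ∑ i, a i * σ (w i * t + c i)| ≤ ε := by
  rcases hσ with hrelu | ⟨hne, hcont, hbd, hmono⟩
  · -- ReLU case
    subst hrelu
    set τ : ℝ → ℝ := fun z => min 1 (max 0 (z + 1)) with hτdef
    have hid : ∀ z : ℝ, τ z = max 0 (z + 1) - max 0 z := by
      intro z
      rw [hτdef]
      rcases le_total z (-1) with h1 | h1 <;> rcases le_total z 0 with h2 | h2 <;>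
        simp [max_def, min_def] <;> split_ifs <;> linarith
    have hτmono : Monotone τ :=
      monotone_const.min (monotone_const.max (monotone_id.add_const 1))
    have hτne : ∃ a b, τ a ≠ τ b := ⟨0, -1, by norm_num [hτdef]⟩
    have hτbd : ∃ C, ∀ z, |τ z| ≤ C := by
      refine ⟨1, fun z => ?_⟩
      rw [abs_le]
      refine ⟨?_, min_le_left _ _⟩
      have h1 : (0:ℝ) ≤ max 0 (z+1) := le_max_left _ _
      have h2 : (0:ℝ) ≤ min 1 (max 0 (z+1)) := le_min one_pos.le h1
      simp only [hτdef]
      linarith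
    obtain ⟨n, a, w, c, hn⟩ := oneD_sigmoid hτne hτbd hτmono g hg R hR hε
    refine ⟨n + n, Fin.append a (fun i => -(a i)), Fin.append w w,
      Fin.append (fun i => c i + 1) c, fun t ht => ?_⟩
    have key := hn t ht
    rw [Fin.sum_univ_add]
    simp only [Fin.append_left, Fin.append_right]
    have hcomb : (∑ i : Fin n, a i * max 0 (w i * t + (c i + 1)))
        + ∑ i : Fin n, -(a i) * max 0 (w i * t + c i)
        = ∑ i : Fin n, a i * τ (w i * t + c i) := by
      rw [← Finset.sum_add_distrib]
      apply Finset.sum_congr rfl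
      intro i _
      rw [hid (w i * t + c i)]
      ring_nf
    rw [hcomb]
    exact key
  · exact oneD_sigmoid hne hbd hmono g hg R hR hε

end IPDS

namespace IPDS

theorem NNApprox.ridge_cos {σ : ℝ → ℝ}
    (hσ : (σ = fun z => max 0 z) ∨
      ((∃ a b, σ a ≠ σ b) ∧ Continuous σ ∧ (∃ C, ∀ z, |σ z| ≤ C) ∧ Monotone σ))
    {p : ℕ} {M : ℝ} (hM : 0 < M) (a : Fin p → ℝ) (b : ℝ) :
    NNApprox σ p M (fun x => Real.cos (∑ j, a j * x j + b)) := by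
  intro δ hδ
  set R : ℝ := (∑ j, |a j|) * M + |b| + 1 with hRdef
  have hR : 0 < R := by positivity
  obtain ⟨n, α, ω, c, hn⟩ := oneD hσ Real.cos Real.continuous_cos R hR hδ
  refine ⟨fun x => ∑ i, α i * σ (∑ j, (ω i * a j) * x j + (ω i * b + c i)),
    ⟨n, α, fun i j => ω i * a j, fun i => ω i * b + c i, fun x => rfl⟩,
    fun x hx => ?_⟩
  have hmem : (∑ j, a j * x j + b) ∈ Set.Icc (-R) R := by
    have h1 : |∑ j, a j * x j + b| ≤ (∑ j, |a j|) * M + |b| := by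
      calc |∑ j, a j * x j + b| ≤ |∑ j, a j * x j| + |b| := abs_add_le _ _
        _ ≤ (∑ j, |a j * x j|) + |b| := by
            linarith [Finset.abs_sum_le_sum_abs (fun j => a j * x j) Finset.univ]
        _ ≤ (∑ j, |a j| * M) + |b| := by
            have : ∀ j : Fin p, |a j * x j| ≤ |a j| * M := by
              intro j
              rw [abs_mul]
              exact mul_le_mul_of_nonneg_left (hx j) (abs_nonneg _)
            have h9 : (∑ j, |a j * x j|) ≤ ∑ j, |a j| * M :=
              Finset.sum_le_sum (fun j _ => this j)
            linarith
        _ = (∑ j, |a j|) * M + |b| := by rw [Finset.sum_mul]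
    rw [abs_le] at h1
    constructor <;> [linarith [h1.1]; linarith [h1.2]]
  have key := hn _ hmem
  have harg : ∀ i, ω i * (∑ j, a j * x j + b) + c i
      = ∑ j, (ω i * a j) * x j + (ω i * b + c i) := by
    intro i
    rw [mul_add, Finset.mul_sum]
    ring_nf
  calc |Real.cos (∑ j, a j * x j + b)
        - ∑ i, α i * σ (∑ j, (ω i * a j) * x j + (ω i * b + c i))|
      = |Real.cos (∑ j, a j * x j + b)
        - ∑ i, α i * σ (ω i * (∑ j, a j * x j + b) + c i)| := by
        congr 2
        exact Finset.sum_congr rfl (fun i _ => by rw [harg i])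
    _ ≤ δ := key

end IPDS

namespace IPDS

theorem sum_single {p : ℕ} (i : Fin p) (c : ℝ) (v : Fin p → ℝ) :
    ∑ j, (if j = i then c else 0) * v j = c * v i := by
  rw [Finset.sum_eq_single i]
  · simp
  · intro j _ hj; simp [hj]
  · intro h; exact absurd (Finset.mem_univ i) h

theorem trig_dense {p : ℕ} {M : ℝ} (hM : 0 < M)
    (K : Set (Fin p → ℝ)) (hK : K = {x : Fin p → ℝ | ∀ i, |x i| ≤ M})
    (H : C(↥K × ↥K, ℝ)) {ε : ℝ} (hε : 0 < ε) :
    ∃ (N : ℕ) (α : Fin N → ℝ) (a a' : Fin N → Fin p → ℝ) (b : Fin N → ℝ),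
      ∀ q : ↥K × ↥K,
        |H q - ∑ k, α k * Real.cos (∑ j, a k j * (q.1 : Fin p → ℝ) j
          + ∑ j, a' k j * (q.2 : Fin p → ℝ) j + b k)| < ε := by
  classical
  have hKcompact : IsCompact K := by
    have : K = Set.pi Set.univ (fun _ : Fin p => Set.Icc (-M) M) := by
      rw [hK]; ext x; simp only [Set.mem_setOf_eq, Set.mem_univ_pi, Set.mem_Icc, abs_le]
    rw [this]
    exact isCompact_univ_pi (fun _ => isCompact_Icc)
  haveI : CompactSpace ↥K := isCompact_iff_compactSpace.mp hKcompact
  -- the generators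
  set F : (Fin p → ℝ) × (Fin p → ℝ) × ℝ → C(↥K × ↥K, ℝ) := fun t =>
    ⟨fun q => Real.cos (∑ j, t.1 j * (q.1 : Fin p → ℝ) j
        + ∑ j, t.2.1 j * (q.2 : Fin p → ℝ) j + t.2.2), by
      apply Real.continuous_cos.comp
      apply Continuous.add
      apply Continuous.add
      · apply continuous_finset_sum
        intro j _
        exact (continuous_const.mul
          ((continuous_apply j).comp (continuous_subtype_val.comp continuous_fst)))
      · apply continuous_finset_sum
        intro j _
        exact (continuous_const.mul
          ((continuous_apply j).comp (continuous_subtype_val.comp continuous_snd)))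
      · exact continuous_const⟩ with hFdef
  set V : Submodule ℝ C(↥K × ↥K, ℝ) := Submodule.span ℝ (Set.range F) with hVdef
  have h1V : (1 : C(↥K × ↥K, ℝ)) ∈ V := by
    have : (1 : C(↥K × ↥K, ℝ)) = F (0, 0, 0) := by
      ext q
      simp [hFdef]
    rw [this]
    exact Submodule.subset_span ⟨(0,0,0), rfl⟩
  have hmulV : ∀ x y : C(↥K × ↥K, ℝ), x ∈ V → y ∈ V → x * y ∈ V := by
    intro x y hx hy
    have hxy : x * y ∈ V * V := Submodule.mul_mem_mul hx hy
    rw [hVdef, Submodule.span_mul_span] at hxy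
    refine Submodule.span_le.2 ?_ hxy
    rintro f hf
    rw [Set.mem_mul] at hf
    obtain ⟨f1, hf1, f2, hf2, rfl⟩ := hf
    obtain ⟨⟨a, a', b⟩, rfl⟩ := hf1
    obtain ⟨⟨d, d', e⟩, rfl⟩ := hf2
    have hprod : F (a, a', b) * F (d, d', e)
        = (2:ℝ)⁻¹ • (F (a + d, a' + d', b + e) + F (a - d, a' - d', b - e)) := by
      ext q
      simp only [hFdef, ContinuousMap.mul_apply, ContinuousMap.smul_apply,
        ContinuousMap.add_apply, ContinuousMap.coe_mk, smul_eq_mul, Pi.add_apply,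
        Pi.sub_apply]
      have e1 : ∑ j, (a j + d j) * (q.1 : Fin p → ℝ) j
          = (∑ j, a j * (q.1 : Fin p → ℝ) j) + ∑ j, d j * (q.1 : Fin p → ℝ) j := by
        rw [← Finset.sum_add_distrib]; exact Finset.sum_congr rfl (fun j _ => by ring)
      have e2 : ∑ j, (a' j + d' j) * (q.2 : Fin p → ℝ) j
          = (∑ j, a' j * (q.2 : Fin p → ℝ) j) + ∑ j, d' j * (q.2 : Fin p → ℝ) j := by
        rw [← Finset.sum_add_distrib]; exact Finset.sum_congr rfl (fun j _ => by ring)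
      have e3 : ∑ j, (a j - d j) * (q.1 : Fin p → ℝ) j
          = (∑ j, a j * (q.1 : Fin p → ℝ) j) - ∑ j, d j * (q.1 : Fin p → ℝ) j := by
        rw [← Finset.sum_sub_distrib]; exact Finset.sum_congr rfl (fun j _ => by ring)
      have e4 : ∑ j, (a' j - d' j) * (q.2 : Fin p → ℝ) j
          = (∑ j, a' j * (q.2 : Fin p → ℝ) j) - ∑ j, d' j * (q.2 : Fin p → ℝ) j := by
        rw [← Finset.sum_sub_distrib]; exact Finset.sum_congr rfl (fun j _ => by ring)
      rw [e1, e2, e3, e4]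
      set U := (∑ j, a j * (q.1 : Fin p → ℝ) j) + (∑ j, a' j * (q.2 : Fin p → ℝ) j) + b
      set W := (∑ j, d j * (q.1 : Fin p → ℝ) j) + (∑ j, d' j * (q.2 : Fin p → ℝ) j) + e
      have harg1 : (∑ j, a j * (q.1 : Fin p → ℝ) j) + (∑ j, d j * (q.1 : Fin p → ℝ) j)
          + ((∑ j, a' j * (q.2 : Fin p → ℝ) j) + (∑ j, d' j * (q.2 : Fin p → ℝ) j)) + (b + e)
          = U + W := by simp only [U, W]; ring
      have harg2 : (∑ j, a j * (q.1 : Fin p → ℝ) j) - (∑ j, d j * (q.1 : Fin p → ℝ) j)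
          + ((∑ j, a' j * (q.2 : Fin p → ℝ) j) - (∑ j, d' j * (q.2 : Fin p → ℝ) j)) + (b - e)
          = U - W := by simp only [U, W]; ring
      have hcc : ∀ U W : ℝ, Real.cos U * Real.cos W
          = (2:ℝ)⁻¹ * (Real.cos (U + W) + Real.cos (U - W)) := by
        intro U W
        rw [Real.cos_add, Real.cos_sub]
        ring
      rw [harg1, harg2]
      exact hcc U W
    rw [hprod]
    exact Submodule.smul_mem _ _ (Submodule.add_mem _
      (Submodule.subset_span ⟨(a + d, a' + d', b + e), rfl⟩)
      (Submodule.subset_span ⟨(a - d, a' - d', b - e), rfl⟩))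
  set A : Subalgebra ℝ C(↥K × ↥K, ℝ) := V.toSubalgebra h1V hmulV with hAdef
  have hsep : A.SeparatesPoints := by
    intro q q' hqq'
    have hdiff : (q.1 : Fin p → ℝ) ≠ (q'.1 : Fin p → ℝ) ∨
        (q.2 : Fin p → ℝ) ≠ (q'.2 : Fin p → ℝ) := by
      by_contra hc
      push_neg at hc
      exact hqq' (Prod.ext (Subtype.ext hc.1) (Subtype.ext hc.2))
    have key : ∀ (u u' : ↥K × ↥K), ∀ i : Fin p,
        (u.1 : Fin p → ℝ) i ≠ (u'.1 : Fin p → ℝ) i →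
        ∃ f ∈ Set.range F, f u ≠ f u' := by
      intro u u' i hi
      set d : ℝ := (u.1 : Fin p → ℝ) i - (u'.1 : Fin p → ℝ) i with hddef
      have hd : d ≠ 0 := sub_ne_zero.2 hi
      refine ⟨F (fun j => if j = i then Real.pi / d else 0, 0,
        -(Real.pi / d * (u'.1 : Fin p → ℝ) i)), ⟨_, rfl⟩, ?_⟩
      simp only [hFdef, ContinuousMap.coe_mk]
      rw [sum_single, sum_single]
      have hz : ∀ v : ↥K × ↥K, ∑ j, (0 : Fin p → ℝ) j * (v.2 : Fin p → ℝ) j = 0 := by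
        intro v; simp
      rw [hz, hz]
      have harg1 : Real.pi / d * (u.1 : Fin p → ℝ) i + 0
          + -(Real.pi / d * (u'.1 : Fin p → ℝ) i) = Real.pi := by
        rw [hddef] at hd ⊢
        field_simp
        ring
      have harg2 : Real.pi / d * (u'.1 : Fin p → ℝ) i + 0
          + -(Real.pi / d * (u'.1 : Fin p → ℝ) i) = 0 := by ring
      rw [harg1, harg2, Real.cos_pi, Real.cos_zero]
      norm_num
    rcases hdiff with h | h
    · have : ∃ i, (q.1 : Fin p → ℝ) i ≠ (q'.1 : Fin p → ℝ) i := by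
        by_contra hc; push_neg at hc; exact h (funext hc)
      obtain ⟨i, hi⟩ := this
      obtain ⟨f, hf, hne⟩ := key q q' i hi
      exact ⟨f, ⟨f, Submodule.subset_span hf, rfl⟩, hne⟩
    · -- swap roles: use the second coordinate
      have : ∃ i, (q.2 : Fin p → ℝ) i ≠ (q'.2 : Fin p → ℝ) i := by
        by_contra hc; push_neg at hc; exact h (funext hc)
      obtain ⟨i, hi⟩ := this
      set d : ℝ := (q.2 : Fin p → ℝ) i - (q'.2 : Fin p → ℝ) i with hddef
      have hd : d ≠ 0 := sub_ne_zero.2 hi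
      refine ⟨F (0, (fun j => if j = i then Real.pi / d else 0),
        -(Real.pi / d * (q'.2 : Fin p → ℝ) i)),
        ⟨_, Submodule.subset_span ⟨_, rfl⟩, rfl⟩, ?_⟩
      simp only [hFdef, ContinuousMap.coe_mk]
      rw [sum_single, sum_single]
      have hz : ∀ v : ↥K × ↥K, ∑ j, (0 : Fin p → ℝ) j * (v.1 : Fin p → ℝ) j = 0 := by
        intro v; simp
      rw [hz, hz]
      have harg1 : 0 + Real.pi / d * (q.2 : Fin p → ℝ) i
          + -(Real.pi / d * (q'.2 : Fin p → ℝ) i) = Real.pi := by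
        rw [hddef] at hd ⊢
        field_simp
        ring
      have harg2 : 0 + Real.pi / d * (q'.2 : Fin p → ℝ) i
          + -(Real.pi / d * (q'.2 : Fin p → ℝ) i) = 0 := by ring
      rw [harg1, harg2, Real.cos_pi, Real.cos_zero]
      norm_num
  have hdense := ContinuousMap.subalgebra_topologicalClosure_eq_top_of_separatesPoints A hsep
  have hHmem : H ∈ closure (A : Set C(↥K × ↥K, ℝ)) := by
    have : H ∈ A.topologicalClosure := by rw [hdense]; trivial
    exact this
  obtain ⟨f, hfA, hdist⟩ := Metric.mem_closure_iff.1 hHmem ε hε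
  have hfV : f ∈ V := hfA
  obtain ⟨n, r, gg, hsum⟩ := Submodule.mem_span_set'.1 hfV
  choose t ht using fun k => (gg k).2
  refine ⟨n, r, fun k => (t k).1, fun k => (t k).2.1, fun k => (t k).2.2, fun q => ?_⟩
  have hfq : f q = ∑ k, r k * Real.cos (∑ j, (t k).1 j * (q.1 : Fin p → ℝ) j
      + ∑ j, (t k).2.1 j * (q.2 : Fin p → ℝ) j + (t k).2.2) := by
    rw [← hsum]
    rw [ContinuousMap.sum_apply]
    apply Finset.sum_congr rfl
    intro k _
    rw [ContinuousMap.smul_apply, smul_eq_mul]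
    congr 1
    rw [← ht k]
    rfl
  have := ContinuousMap.dist_apply_le_dist (f := H) (g := f) q
  rw [Real.dist_eq] at this
  calc |H q - ∑ k, r k * Real.cos (∑ j, (t k).1 j * (q.1 : Fin p → ℝ) j
      + ∑ j, (t k).2.1 j * (q.2 : Fin p → ℝ) j + (t k).2.2)|
      = |H q - f q| := by rw [hfq]
    _ ≤ dist H f := this
    _ < ε := hdist

end IPDS

namespace IPDS

theorem family_to_matrix {σ : ℝ → ℝ} {p m : ℕ} (w : Fin m → (Fin p → ℝ) → ℝ)
    (hw : ∀ k, IsNN σ (w k)) :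
    ∃ (n : ℕ) (A : Matrix (Fin m) (Fin n) ℝ) (B : Matrix (Fin n) (Fin p) ℝ) (c : Fin n → ℝ),
      ∀ x : Fin p → ℝ, ∀ k, (A.mulVec fun i => σ (B.mulVec x i + c i)) k = w k x := by
  classical
  choose nn α β γ hrep using hw
  set n0 : ℕ := Finset.univ.sup nn with hn0
  have hle : ∀ k, nn k ≤ n0 := fun k => Finset.le_sup (Finset.mem_univ k)
  set α' : Fin m → ℕ → ℝ := fun k i => if h : i < nn k then α k ⟨i, h⟩ else 0 with hα'
  set β' : Fin m → ℕ → Fin p → ℝ :=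
    fun k i => if h : i < nn k then β k ⟨i, h⟩ else 0 with hβ'
  set γ' : Fin m → ℕ → ℝ := fun k i => if h : i < nn k then γ k ⟨i, h⟩ else 0 with hγ'
  have hpad : ∀ k x, w k x
      = ∑ i ∈ Finset.range n0, α' k i * σ (∑ j, β' k i j * x j + γ' k i) := by
    intro k x
    rw [hrep k x]
    have h1 : ∑ i : Fin (nn k), α k i * σ (∑ j, β k i j * x j + γ k i)
        = ∑ i ∈ Finset.range (nn k), α' k i * σ (∑ j, β' k i j * x j + γ' k i) := by
      rw [← Fin.sum_univ_eq_sum_range (fun i => α' k i * σ (∑ j, β' k i j * x j + γ' k i))]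
      apply Finset.sum_congr rfl
      intro i _
      have hi : (i : ℕ) < nn k := i.isLt
      simp only [hα', hβ', hγ', dif_pos hi, Fin.eta]
    rw [h1]
    apply Finset.sum_subset (Finset.range_subset_range.2 (hle k))
    intro i _ hi
    rw [Finset.mem_range] at hi
    push_neg at hi
    have : α' k i = 0 := by simp only [hα', dif_neg (not_lt.2 hi)]
    rw [this, zero_mul]
  refine ⟨m * n0,
    (fun k I => if (finProdFinEquiv.symm I).1 = k
      then α' (finProdFinEquiv.symm I).1 ((finProdFinEquiv.symm I).2 : ℕ) else 0),
    (fun I j => β' (finProdFinEquiv.symm I).1 ((finProdFinEquiv.symm I).2 : ℕ) j),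
    (fun I => γ' (finProdFinEquiv.symm I).1 ((finProdFinEquiv.symm I).2 : ℕ)),
    fun x k => ?_⟩
  have hmv : ∀ I : Fin (m * n0),
      Matrix.mulVec (fun I j => β' (finProdFinEquiv.symm I).1 ((finProdFinEquiv.symm I).2 : ℕ) j) x I
        = ∑ j, β' (finProdFinEquiv.symm I).1 ((finProdFinEquiv.symm I).2 : ℕ) j * x j := by
    intro I
    simp [Matrix.mulVec, dotProduct]
  show (dotProduct _ _) = _
  rw [dotProduct]
  rw [← Equiv.sum_comp finProdFinEquiv]
  rw [Fintype.sum_prod_type]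
  have hterm : ∀ (k' : Fin m) (i : Fin n0),
      (if (finProdFinEquiv.symm (finProdFinEquiv (k', i))).1 = k
        then α' (finProdFinEquiv.symm (finProdFinEquiv (k', i))).1
          ((finProdFinEquiv.symm (finProdFinEquiv (k', i))).2 : ℕ) else 0)
        * σ (Matrix.mulVec (fun I j => β' (finProdFinEquiv.symm I).1
              ((finProdFinEquiv.symm I).2 : ℕ) j) x (finProdFinEquiv (k', i))
            + γ' (finProdFinEquiv.symm (finProdFinEquiv (k', i))).1
              ((finProdFinEquiv.symm (finProdFinEquiv (k', i))).2 : ℕ))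
      = (if k' = k then α' k' (i:ℕ) else 0)
        * σ (∑ j, β' k' (i:ℕ) j * x j + γ' k' (i:ℕ)) := by
    intro k' i
    rw [hmv]
    rw [Equiv.symm_apply_apply]
  simp only [hterm]
  rw [Finset.sum_eq_single k]
  · rw [hpad k x]
    rw [← Fin.sum_univ_eq_sum_range (fun i => α' k i * σ (∑ j, β' k i j * x j + γ' k i))]
    apply Finset.sum_congr rfl
    intro i _
    simp
  · intro k' _ hk'
    apply Finset.sum_eq_zero
    intro i _
    rw [if_neg hk', zero_mul]
  · intro h
    exact absurd (Finset.mem_univ k) h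

end IPDS


namespace IPDS
/-- helper identities and bounds used in the main proof -/
theorem NNApprox.congr {σ : ℝ → ℝ} {p : ℕ} {M : ℝ} {f g : (Fin p → ℝ) → ℝ}
    (h : ∀ x, f x = g x) (hf : NNApprox σ p M f) : NNApprox σ p M g := by
  intro δ hδ
  obtain ⟨w, hw, hwa⟩ := hf δ hδ
  exact ⟨w, hw, fun x hx => by rw [← h x]; exact hwa x hx⟩

theorem prod_err {Cb δ u v ut vt : ℝ} (hCb : 0 ≤ Cb) (hδ1 : δ ≤ 1) (hδ0 : 0 ≤ δ)
    (hu : |u| ≤ Cb) (hv : |v| ≤ Cb) (hue : |u - ut| ≤ δ) (hve : |v - vt| ≤ δ) :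
    |u * v - ut * vt| ≤ (2 * Cb + 1) * δ := by
  have hvt : |vt| ≤ Cb + 1 := by
    have : |vt| ≤ |v| + |v - vt| := by
      calc |vt| = |v - (v - vt)| := by ring_nf
        _ ≤ |v| + |v - vt| := abs_sub _ _
    linarith
  calc |u * v - ut * vt| = |u * (v - vt) + (u - ut) * vt| := by ring_nf
    _ ≤ |u * (v - vt)| + |(u - ut) * vt| := abs_add_le _ _
    _ = |u| * |v - vt| + |u - ut| * |vt| := by rw [abs_mul, abs_mul]
    _ ≤ Cb * δ + δ * (Cb + 1) := by
        have h1 : |u| * |v - vt| ≤ Cb * δ :=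
          mul_le_mul hu hve (abs_nonneg _) hCb
        have h2 : |u - ut| * |vt| ≤ δ * (Cb + 1) :=
          mul_le_mul hue hvt (abs_nonneg _) hδ0
        linarith
    _ ≤ (2 * Cb + 1) * δ := by nlinarith

end IPDS

set_option maxHeartbeats 2000000 in
/-- Approximation theorem for the inner-product difference similarity (IPDS) model:
for a continuous `f* : [-M,M]ᵖ → Y` into a compact `Y ⊆ ℝ^{K*}` and a kernel
`g* : Y × Y → ℝ` dominated by some positive definite kernel `g` (i.e. `g - g*` is PD),
and an activation `σ` which is either ReLU or non-constant, continuous, bounded and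
monotone increasing, for every `ε > 0` there are one-hidden-layer neural networks
`f_NN(x) = A σ(Bx + c)` and `r_NN(x) = E σ(Fx + o)` such that
`|g*(f*(x), f*(x')) - (⟨f_NN(x), f_NN(x')⟩ - ⟨r_NN(x), r_NN(x')⟩)| < ε` on the cube. -/
theorem approximation_theorem_for_IPDS
    (p Kstar : ℕ) (M : ℝ) (hM : 0 < M)
    (Y : Set (EuclideanSpace ℝ (Fin Kstar))) (hY : IsCompact Y)
    (fstar : (Fin p → ℝ) → EuclideanSpace ℝ (Fin Kstar))
    (hfstar_cont : ContinuousOn fstar {x : Fin p → ℝ | ∀ i, |x i| ≤ M})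
    (hfstar_maps : ∀ x ∈ {x : Fin p → ℝ | ∀ i, |x i| ≤ M}, fstar x ∈ Y)
    (gstar : EuclideanSpace ℝ (Fin Kstar) → EuclideanSpace ℝ (Fin Kstar) → ℝ)
    (hgstar_symm : ∀ y ∈ Y, ∀ y' ∈ Y, gstar y y' = gstar y' y)
    (hgstar_cont : ContinuousOn
      (fun yy : EuclideanSpace ℝ (Fin Kstar) × EuclideanSpace ℝ (Fin Kstar) =>
        gstar yy.1 yy.2) (Y ×ˢ Y))
    -- `gstar` is dominated by some positive definite kernel `g`:
    (g : EuclideanSpace ℝ (Fin Kstar) → EuclideanSpace ℝ (Fin Kstar) → ℝ)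
    (hg_symm : ∀ y ∈ Y, ∀ y' ∈ Y, g y y' = g y' y)
    (hg_cont : ContinuousOn
      (fun yy : EuclideanSpace ℝ (Fin Kstar) × EuclideanSpace ℝ (Fin Kstar) =>
        g yy.1 yy.2) (Y ×ˢ Y))
    (hg_pd : ∀ (n : ℕ) (c : Fin n → ℝ) (y : Fin n → EuclideanSpace ℝ (Fin Kstar)),
      (∀ i, y i ∈ Y) → 0 ≤ ∑ i, ∑ j, c i * c j * g (y i) (y j))
    (hdom_pd : ∀ (n : ℕ) (c : Fin n → ℝ) (y : Fin n → EuclideanSpace ℝ (Fin Kstar)),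
      (∀ i, y i ∈ Y) → 0 ≤ ∑ i, ∑ j, c i * c j * (g (y i) (y j) - gstar (y i) (y j)))
    (σ : ℝ → ℝ)
    (hσ : (σ = fun z => max 0 z) ∨
      ((∃ a b, σ a ≠ σ b) ∧ Continuous σ ∧ (∃ C, ∀ z, |σ z| ≤ C) ∧ Monotone σ)) :
    ∀ ε > (0 : ℝ), ∃ (Kp Km mp mm : ℕ) (A : Matrix (Fin Kp) (Fin mp) ℝ)
      (B : Matrix (Fin mp) (Fin p) ℝ) (c : Fin mp → ℝ)
      (E : Matrix (Fin Km) (Fin mm) ℝ) (F : Matrix (Fin mm) (Fin p) ℝ) (o : Fin mm → ℝ),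
      ∀ x ∈ {x : Fin p → ℝ | ∀ i, |x i| ≤ M}, ∀ x' ∈ {x : Fin p → ℝ | ∀ i, |x i| ≤ M},
        |gstar (fstar x) (fstar x')
          - (dotProduct
              (A.mulVec fun i => σ (B.mulVec x i + c i))
              (A.mulVec fun i => σ (B.mulVec x' i + c i))
            - dotProduct
              (E.mulVec fun i => σ (F.mulVec x i + o i))
              (E.mulVec fun i => σ (F.mulVec x' i + o i)))| < ε := by
  classical
  intro ε hε
  set K : Set (Fin p → ℝ) := {x : Fin p → ℝ | ∀ i, |x i| ≤ M} with hKdef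
  -- the target kernel as a continuous map on the compact product
  have hφ : Continuous (fun q : ↥K × ↥K =>
      gstar (fstar (q.1 : Fin p → ℝ)) (fstar (q.2 : Fin p → ℝ))) := by
    have hres : Continuous (K.restrict fstar) := hfstar_cont.restrict
    have hmap : Continuous (fun q : ↥K × ↥K =>
        ((fstar (q.1 : Fin p → ℝ), fstar (q.2 : Fin p → ℝ)) :
          EuclideanSpace ℝ (Fin Kstar) × EuclideanSpace ℝ (Fin Kstar))) :=
      (hres.comp continuous_fst).prodMk (hres.comp continuous_snd)
    exact hgstar_cont.comp_continuous hmap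
      (fun q => Set.mem_prod.2 ⟨hfstar_maps _ q.1.2, hfstar_maps _ q.2.2⟩)
  obtain ⟨N, α, a, a', b, htrig⟩ := IPDS.trig_dense hM K hKdef
    ⟨_, hφ⟩ (by positivity : (0:ℝ) < ε/2)
  simp only [ContinuousMap.coe_mk] at htrig
  -- the four families of ridge functions
  set P1 : Fin N → (Fin p → ℝ) → ℝ := fun k x =>
    (α k * Real.cos (∑ j, a k j * x j) + Real.cos (∑ j, a' k j * x j + b k)) / 2 with hP1
  set Q1 : Fin N → (Fin p → ℝ) → ℝ := fun k x =>
    (α k * Real.cos (∑ j, a k j * x j) - Real.cos (∑ j, a' k j * x j + b k)) / 2 with hQ1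
  set P2 : Fin N → (Fin p → ℝ) → ℝ := fun k x =>
    (α k * Real.sin (∑ j, a k j * x j) + Real.sin (∑ j, a' k j * x j + b k)) / 2 with hP2
  set Q2 : Fin N → (Fin p → ℝ) → ℝ := fun k x =>
    (α k * Real.sin (∑ j, a k j * x j) - Real.sin (∑ j, a' k j * x j + b k)) / 2 with hQ2
  set Wp : Fin (N + N) → (Fin p → ℝ) → ℝ := Fin.append P1 Q2 with hWp
  set Wm : Fin (N + N) → (Fin p → ℝ) → ℝ := Fin.append Q1 P2 with hWm
  -- the symmetrized separable approximation
  have hGs : ∀ x ∈ K, ∀ x' ∈ K,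
      |gstar (fstar x) (fstar x')
        - ((∑ k, Wp k x * Wp k x') - ∑ k, Wm k x * Wm k x')| < ε / 2 := by
    intro x hx x' hx'
    have h1 := htrig (⟨x, hx⟩, ⟨x', hx'⟩)
    have h2 := htrig (⟨x', hx'⟩, ⟨x, hx⟩)
    have hsym : gstar (fstar x') (fstar x) = gstar (fstar x) (fstar x') :=
      hgstar_symm _ (hfstar_maps _ hx') _ (hfstar_maps _ hx)
    rw [hsym] at h2
    have hpolar : (∑ k, Wp k x * Wp k x') - ∑ k, Wm k x * Wm k x'
        = ((∑ k, α k * Real.cos (∑ j, a k j * x j + ∑ j, a' k j * x' j + b k))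
          + (∑ k, α k * Real.cos (∑ j, a k j * x' j + ∑ j, a' k j * x j + b k))) / 2 := by
      have hsplitp : ∑ k, Wp k x * Wp k x'
          = (∑ k : Fin N, P1 k x * P1 k x') + ∑ k : Fin N, Q2 k x * Q2 k x' := by
        rw [hWp, Fin.sum_univ_add]
        simp only [Fin.append_left, Fin.append_right]
      have hsplitm : ∑ k, Wm k x * Wm k x'
          = (∑ k : Fin N, Q1 k x * Q1 k x') + ∑ k : Fin N, P2 k x * P2 k x' := by
        rw [hWm, Fin.sum_univ_add]
        simp only [Fin.append_left, Fin.append_right]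
      have hterm : ∀ k : Fin N,
          P1 k x * P1 k x' + Q2 k x * Q2 k x' - (Q1 k x * Q1 k x' + P2 k x * P2 k x')
          = (α k * Real.cos (∑ j, a k j * x j + ∑ j, a' k j * x' j + b k)
            + α k * Real.cos (∑ j, a k j * x' j + ∑ j, a' k j * x j + b k)) / 2 := by
        intro k
        have e1 : ∑ j, a k j * x j + ∑ j, a' k j * x' j + b k
            = (∑ j, a k j * x j) + ((∑ j, a' k j * x' j) + b k) := by ring
        have e2 : ∑ j, a k j * x' j + ∑ j, a' k j * x j + b k
            = (∑ j, a k j * x' j) + ((∑ j, a' k j * x j) + b k) := by ring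
        have hc1 : Real.cos ((∑ j, a k j * x j) + ((∑ j, a' k j * x' j) + b k))
            = Real.cos (∑ j, a k j * x j) * Real.cos (∑ j, a' k j * x' j + b k)
              - Real.sin (∑ j, a k j * x j) * Real.sin (∑ j, a' k j * x' j + b k) :=
          Real.cos_add _ _
        have hc2 : Real.cos ((∑ j, a k j * x' j) + ((∑ j, a' k j * x j) + b k))
            = Real.cos (∑ j, a k j * x' j) * Real.cos (∑ j, a' k j * x j + b k)
              - Real.sin (∑ j, a k j * x' j) * Real.sin (∑ j, a' k j * x j + b k) :=
          Real.cos_add _ _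
        rw [e1, e2, hc1, hc2]
        simp only [hP1, hQ1, hP2, hQ2]
        ring
      rw [hsplitp, hsplitm]
      calc (∑ k : Fin N, P1 k x * P1 k x') + (∑ k : Fin N, Q2 k x * Q2 k x')
            - ((∑ k : Fin N, Q1 k x * Q1 k x') + ∑ k : Fin N, P2 k x * P2 k x')
          = ∑ k : Fin N, (P1 k x * P1 k x' + Q2 k x * Q2 k x'
              - (Q1 k x * Q1 k x' + P2 k x * P2 k x')) := by
            rw [Finset.sum_sub_distrib, Finset.sum_add_distrib, Finset.sum_add_distrib]
        _ = ∑ k : Fin N, (α k * Real.cos (∑ j, a k j * x j + ∑ j, a' k j * x' j + b k)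
            + α k * Real.cos (∑ j, a k j * x' j + ∑ j, a' k j * x j + b k)) / 2 :=
            Finset.sum_congr rfl (fun k _ => hterm k)
        _ = ((∑ k, α k * Real.cos (∑ j, a k j * x j + ∑ j, a' k j * x' j + b k))
          + (∑ k, α k * Real.cos (∑ j, a k j * x' j + ∑ j, a' k j * x j + b k))) / 2 := by
            rw [← Finset.sum_add_distrib, Finset.sum_div]
    rw [hpolar]
    have key : gstar (fstar x) (fstar x')
        - ((∑ k, α k * Real.cos (∑ j, a k j * x j + ∑ j, a' k j * x' j + b k))
          + (∑ k, α k * Real.cos (∑ j, a k j * x' j + ∑ j, a' k j * x j + b k))) / 2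
        = ((gstar (fstar x) (fstar x')
            - ∑ k, α k * Real.cos (∑ j, a k j * x j + ∑ j, a' k j * x' j + b k))
          + (gstar (fstar x) (fstar x')
            - ∑ k, α k * Real.cos (∑ j, a k j * x' j + ∑ j, a' k j * x j + b k))) / 2 := by
      ring
    rw [key]
    rw [abs_div]
    have habs2 : |(2:ℝ)| = 2 := by norm_num
    rw [habs2, div_lt_iff₀ (by norm_num : (0:ℝ) < 2)]
    calc |(gstar (fstar x) (fstar x')
            - ∑ k, α k * Real.cos (∑ j, a k j * x j + ∑ j, a' k j * x' j + b k))
          + (gstar (fstar x) (fstar x')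
            - ∑ k, α k * Real.cos (∑ j, a k j * x' j + ∑ j, a' k j * x j + b k))|
        ≤ |gstar (fstar x) (fstar x')
            - ∑ k, α k * Real.cos (∑ j, a k j * x j + ∑ j, a' k j * x' j + b k)|
          + |gstar (fstar x) (fstar x')
            - ∑ k, α k * Real.cos (∑ j, a k j * x' j + ∑ j, a' k j * x j + b k)| :=
          abs_add_le _ _
      _ < ε/2 + ε/2 := add_lt_add h1 h2
      _ = ε / 2 * 2 := by ring
  -- uniform bound on the families
  set Cb : ℝ := (∑ k, |α k|) + 1 with hCb
  have hCbpos : 0 < Cb := by positivity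
  have hαk : ∀ k, |α k| ≤ Cb - 1 := by
    intro k
    rw [hCb]
    simp only [add_sub_cancel_right]
    exact Finset.single_le_sum (fun i _ => abs_nonneg (α i)) (Finset.mem_univ k)
  have hbound4 : ∀ (k : Fin N) (x : Fin p → ℝ),
      |P1 k x| ≤ Cb ∧ |Q1 k x| ≤ Cb ∧ |P2 k x| ≤ Cb ∧ |Q2 k x| ≤ Cb := by
    intro k x
    have hc1 : |Real.cos (∑ j, a k j * x j)| ≤ 1 := Real.abs_cos_le_one _
    have hc2 : |Real.cos (∑ j, a' k j * x j + b k)| ≤ 1 := Real.abs_cos_le_one _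
    have hs1 : |Real.sin (∑ j, a k j * x j)| ≤ 1 := Real.abs_sin_le_one _
    have hs2 : |Real.sin (∑ j, a' k j * x j + b k)| ≤ 1 := Real.abs_sin_le_one _
    have hα := hαk k
    have hCb1 : (0:ℝ) ≤ Cb - 1 := by
      rw [hCb]
      have hnn : (0:ℝ) ≤ ∑ k, |α k| := Finset.sum_nonneg fun i _ => abs_nonneg _
      linarith
    have hmul1 : |α k * Real.cos (∑ j, a k j * x j)| ≤ Cb - 1 := by
      rw [abs_mul]
      calc |α k| * |Real.cos (∑ j, a k j * x j)| ≤ (Cb - 1) * 1 :=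
          mul_le_mul hα hc1 (abs_nonneg _) hCb1
        _ = Cb - 1 := mul_one _
    have hmul2 : |α k * Real.sin (∑ j, a k j * x j)| ≤ Cb - 1 := by
      rw [abs_mul]
      calc |α k| * |Real.sin (∑ j, a k j * x j)| ≤ (Cb - 1) * 1 :=
          mul_le_mul hα hs1 (abs_nonneg _) hCb1
        _ = Cb - 1 := mul_one _
    refine ⟨?_, ?_, ?_, ?_⟩ <;>
      [skip; skip; skip; skip]
    · simp only [hP1]
      rw [abs_div, (by norm_num : |(2:ℝ)| = 2), div_le_iff₀ (by norm_num : (0:ℝ) < 2)]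
      calc |α k * Real.cos (∑ j, a k j * x j) + Real.cos (∑ j, a' k j * x j + b k)|
          ≤ |α k * Real.cos (∑ j, a k j * x j)| + |Real.cos (∑ j, a' k j * x j + b k)| :=
            abs_add_le _ _
        _ ≤ Cb * 2 := by linarith
    · simp only [hQ1]
      rw [abs_div, (by norm_num : |(2:ℝ)| = 2), div_le_iff₀ (by norm_num : (0:ℝ) < 2)]
      calc |α k * Real.cos (∑ j, a k j * x j) - Real.cos (∑ j, a' k j * x j + b k)|
          ≤ |α k * Real.cos (∑ j, a k j * x j)| + |Real.cos (∑ j, a' k j * x j + b k)| :=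
            abs_sub _ _
        _ ≤ Cb * 2 := by linarith
    · simp only [hP2]
      rw [abs_div, (by norm_num : |(2:ℝ)| = 2), div_le_iff₀ (by norm_num : (0:ℝ) < 2)]
      calc |α k * Real.sin (∑ j, a k j * x j) + Real.sin (∑ j, a' k j * x j + b k)|
          ≤ |α k * Real.sin (∑ j, a k j * x j)| + |Real.sin (∑ j, a' k j * x j + b k)| :=
            abs_add_le _ _
        _ ≤ Cb * 2 := by linarith
    · simp only [hQ2]
      rw [abs_div, (by norm_num : |(2:ℝ)| = 2), div_le_iff₀ (by norm_num : (0:ℝ) < 2)]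
      calc |α k * Real.sin (∑ j, a k j * x j) - Real.sin (∑ j, a' k j * x j + b k)|
          ≤ |α k * Real.sin (∑ j, a k j * x j)| + |Real.sin (∑ j, a' k j * x j + b k)| :=
            abs_sub _ _
        _ ≤ Cb * 2 := by linarith
  have hWpbd : ∀ (k : Fin (N + N)) (x : Fin p → ℝ), |Wp k x| ≤ Cb := by
    intro k
    induction k using Fin.addCases with
    | left i => intro x; simp only [hWp, Fin.append_left]; exact (hbound4 i x).1
    | right i => intro x; simp only [hWp, Fin.append_right]; exact (hbound4 i x).2.2.2
  have hWmbd : ∀ (k : Fin (N + N)) (x : Fin p → ℝ), |Wm k x| ≤ Cb := by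
    intro k
    induction k using Fin.addCases with
    | left i => intro x; simp only [hWm, Fin.append_left]; exact (hbound4 i x).2.1
    | right i => intro x; simp only [hWm, Fin.append_right]; exact (hbound4 i x).2.2.1
  -- approximability of the families
  have hcos_ridge : ∀ (av : Fin p → ℝ) (bv : ℝ),
      IPDS.NNApprox σ p M (fun x => Real.cos (∑ j, av j * x j + bv)) :=
    fun av bv => IPDS.NNApprox.ridge_cos hσ hM av bv
  have hcos0 : ∀ (av : Fin p → ℝ),
      IPDS.NNApprox σ p M (fun x => Real.cos (∑ j, av j * x j)) := by
    intro av
    refine IPDS.NNApprox.congr (fun x => ?_) (hcos_ridge av 0)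
    rw [add_zero]
  have hsin_ridge : ∀ (av : Fin p → ℝ) (bv : ℝ),
      IPDS.NNApprox σ p M (fun x => Real.sin (∑ j, av j * x j + bv)) := by
    intro av bv
    refine IPDS.NNApprox.congr (fun x => ?_) (hcos_ridge av (bv - Real.pi/2))
    have harg : ∑ j, av j * x j + (bv - Real.pi/2)
        = (∑ j, av j * x j + bv) - Real.pi/2 := by ring
    rw [harg, Real.cos_sub_pi_div_two]
  have hsin0 : ∀ (av : Fin p → ℝ),
      IPDS.NNApprox σ p M (fun x => Real.sin (∑ j, av j * x j)) := by
    intro av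
    refine IPDS.NNApprox.congr (fun x => ?_) (hsin_ridge av 0)
    rw [add_zero]
  have hP1app : ∀ i : Fin N, IPDS.NNApprox σ p M (P1 i) := by
    intro i
    have h := (((hcos0 (a i)).smul (α i)).add (hcos_ridge (a' i) (b i))).smul (1/2)
    refine IPDS.NNApprox.congr (fun x => ?_) h
    simp only [hP1]
    ring
  have hQ1app : ∀ i : Fin N, IPDS.NNApprox σ p M (Q1 i) := by
    intro i
    have h := (((hcos0 (a i)).smul (α i)).add
      ((hcos_ridge (a' i) (b i)).smul (-1))).smul (1/2)
    refine IPDS.NNApprox.congr (fun x => ?_) h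
    simp only [hQ1]
    ring
  have hP2app : ∀ i : Fin N, IPDS.NNApprox σ p M (P2 i) := by
    intro i
    have h := (((hsin0 (a i)).smul (α i)).add (hsin_ridge (a' i) (b i))).smul (1/2)
    refine IPDS.NNApprox.congr (fun x => ?_) h
    simp only [hP2]
    ring
  have hQ2app : ∀ i : Fin N, IPDS.NNApprox σ p M (Q2 i) := by
    intro i
    have h := (((hsin0 (a i)).smul (α i)).add
      ((hsin_ridge (a' i) (b i)).smul (-1))).smul (1/2)
    refine IPDS.NNApprox.congr (fun x => ?_) h
    simp only [hQ2]
    ring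
  have hWpapp : ∀ k : Fin (N + N), IPDS.NNApprox σ p M (Wp k) := by
    intro k
    induction k using Fin.addCases with
    | left i =>
      refine IPDS.NNApprox.congr (fun x => ?_) (hP1app i)
      simp only [hWp, Fin.append_left]
    | right i =>
      refine IPDS.NNApprox.congr (fun x => ?_) (hQ2app i)
      simp only [hWp, Fin.append_right]
  have hWmapp : ∀ k : Fin (N + N), IPDS.NNApprox σ p M (Wm k) := by
    intro k
    induction k using Fin.addCases with
    | left i =>
      refine IPDS.NNApprox.congr (fun x => ?_) (hQ1app i)
      simp only [hWm, Fin.append_left]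
    | right i =>
      refine IPDS.NNApprox.congr (fun x => ?_) (hP2app i)
      simp only [hWm, Fin.append_right]
  -- choose the accuracy of the network approximations
  set δ : ℝ := min 1 (ε / (16 * ((N+N) + 1) * (2 * Cb + 1))) with hδdef
  have hδpos : 0 < δ := lt_min one_pos (by positivity)
  have hδ1 : δ ≤ 1 := min_le_left _ _
  choose wp hwpNN hwperr using fun k => hWpapp k δ hδpos
  choose wm hwmNN hwmerr using fun k => hWmapp k δ hδpos
  -- total replacement error bound
  have hbig : (((N+N) : ℕ) : ℝ) * ((2 * Cb + 1) * δ) ≤ ε / 8 := by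
    have hδ2 : δ ≤ ε / (16 * ((N:ℝ) + N + 1) * (2 * Cb + 1)) := min_le_right _ _
    have hD : (0:ℝ) < 16 * ((N:ℝ) + N + 1) * (2 * Cb + 1) := by positivity
    have step1 : ((N:ℝ)+N) * ((2 * Cb + 1) * δ)
        ≤ ((N:ℝ)+N) * ((2 * Cb + 1) * (ε / (16 * ((N:ℝ)+N+1) * (2 * Cb + 1)))) := by
      apply mul_le_mul_of_nonneg_left _ (by positivity)
      exact mul_le_mul_of_nonneg_left hδ2 (by positivity)
    have step2 : ((N:ℝ)+N) * ((2 * Cb + 1) * (ε / (16 * ((N:ℝ)+N+1) * (2 * Cb + 1))))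
        ≤ ε / 8 := by
      have h2 : ((N:ℝ)+N) * ((2 * Cb + 1) * (ε / (16 * ((N:ℝ)+N+1) * (2 * Cb + 1))))
          = ε * (((N:ℝ)+N) * (2 * Cb + 1)) / (16 * ((N:ℝ)+N+1) * (2 * Cb + 1)) := by
        ring
      rw [h2, div_le_div_iff₀ hD (by norm_num : (0:ℝ) < 8)]
      have hnn : 0 ≤ ε * (2 * Cb + 1) * ((N:ℝ)+N+2) := by positivity
      nlinarith [hnn]
    push_cast
    linarith
  have hsum_err : ∀ (W wt : Fin (N+N) → (Fin p → ℝ) → ℝ),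
      (∀ k x, |W k x| ≤ Cb) →
      (∀ k, ∀ x : Fin p → ℝ, (∀ i, |x i| ≤ M) → |W k x - wt k x| ≤ δ) →
      ∀ x ∈ K, ∀ x' ∈ K,
        |(∑ k, W k x * W k x') - ∑ k, wt k x * wt k x'| ≤ ε / 8 := by
    intro W wt hWbd hWerr x hx x' hx'
    calc |(∑ k, W k x * W k x') - ∑ k, wt k x * wt k x'|
        = |∑ k, (W k x * W k x' - wt k x * wt k x')| := by
          rw [Finset.sum_sub_distrib]
      _ ≤ ∑ k, |W k x * W k x' - wt k x * wt k x'| := Finset.abs_sum_le_sum_abs _ _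
      _ ≤ ∑ k : Fin (N+N), (2 * Cb + 1) * δ := by
          apply Finset.sum_le_sum
          intro k _
          exact IPDS.prod_err hCbpos.le hδ1 hδpos.le (hWbd k x) (hWbd k x')
            (hWerr k x hx) (hWerr k x' hx')
      _ = (((N+N) : ℕ) : ℝ) * ((2 * Cb + 1) * δ) := by
          rw [Finset.sum_const, Finset.card_univ, Fintype.card_fin, nsmul_eq_mul]
      _ ≤ ε / 8 := hbig
  -- assemble the networks into matrices
  obtain ⟨mp, A, B, c, hA⟩ := IPDS.family_to_matrix wp hwpNN
  obtain ⟨mm, E, F, o, hE⟩ := IPDS.family_to_matrix wm hwmNN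
  refine ⟨(N+N), (N+N), mp, mm, A, B, c, E, F, o, ?_⟩
  intro x hx x' hx'
  have hdotp : dotProduct
      (A.mulVec fun i => σ (B.mulVec x i + c i))
      (A.mulVec fun i => σ (B.mulVec x' i + c i)) = ∑ k, wp k x * wp k x' := by
    rw [dotProduct]
    exact Finset.sum_congr rfl (fun k _ => by rw [hA x k, hA x' k])
  have hdotm : dotProduct
      (E.mulVec fun i => σ (F.mulVec x i + o i))
      (E.mulVec fun i => σ (F.mulVec x' i + o i)) = ∑ k, wm k x * wm k x' := by
    rw [dotProduct]
    exact Finset.sum_congr rfl (fun k _ => by rw [hE x k, hE x' k])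
  rw [hdotp, hdotm]
  have h0 := hGs x hx x' hx'
  have hp := hsum_err Wp wp hWpbd (fun k => hwperr k) x hx x' hx'
  have hm := hsum_err Wm wm hWmbd (fun k => hwmerr k) x hx x' hx'
  have hdecomp : gstar (fstar x) (fstar x')
      - ((∑ k, wp k x * wp k x') - ∑ k, wm k x * wm k x')
      = (gstar (fstar x) (fstar x')
          - ((∑ k, Wp k x * Wp k x') - ∑ k, Wm k x * Wm k x'))
        + ((∑ k, Wp k x * Wp k x') - ∑ k, wp k x * wp k x')
        - ((∑ k, Wm k x * Wm k x') - ∑ k, wm k x * wm k x') := by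
    ring
  rw [hdecomp]
  calc |(gstar (fstar x) (fstar x')
          - ((∑ k, Wp k x * Wp k x') - ∑ k, Wm k x * Wm k x'))
        + ((∑ k, Wp k x * Wp k x') - ∑ k, wp k x * wp k x')
        - ((∑ k, Wm k x * Wm k x') - ∑ k, wm k x * wm k x')|
      ≤ |(gstar (fstar x) (fstar x')
          - ((∑ k, Wp k x * Wp k x') - ∑ k, Wm k x * Wm k x'))
        + ((∑ k, Wp k x * Wp k x') - ∑ k, wp k x * wp k x')|
        + |(∑ k, Wm k x * Wm k x') - ∑ k, wm k x * wm k x'| := abs_sub _ _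
    _ ≤ |gstar (fstar x) (fstar x')
          - ((∑ k, Wp k x * Wp k x') - ∑ k, Wm k x * Wm k x')|
        + |(∑ k, Wp k x * Wp k x') - ∑ k, wp k x * wp k x'|
        + |(∑ k, Wm k x * Wm k x') - ∑ k, wm k x * wm k x'| := by
        have := abs_add_le (gstar (fstar x) (fstar x')
          - ((∑ k, Wp k x * Wp k x') - ∑ k, Wm k x * Wm k x'))
          ((∑ k, Wp k x * Wp k x') - ∑ k, wp k x * wp k x')
        linarith
    _ < ε := by linarith
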